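/- arXiv:1305.4332 — 3 statements merged into one kernel-verified Lean document; each statement's English description precedes it below -/
import Mathlib

section
/- Let α > 0, p > 1 with 0 < αp < N, and let μ be a nonnegative Radon measure on ℝ^N with ||M_{αp,R}^{(p-1)(β-1)/β}[μ]||_{L^∞} ≤ 2 for some β ≥ 1 and supp μ ⊂ B_R with μ(B_R) ≤ C_0. Then there is a constant c depending on N, α, p, β, C_0, R such that for all t ∈ (0,1) and all x ∈ ℝ^N, the tail Wolff potential satisfies L_{α,p}^{2t}[μ](x) ≤ c (−\ln(t/2))^{1/β}. -/
open MeasureTheory ENNReal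

/-- The weight `h_η(t) = (-ln t)^{-η}` for `t ≤ 1/2` and `(ln 2)^{-η}` for `t ≥ 1/2`. -/
noncomputable def hfun (η t : ℝ) : ℝ :=
  if t ≤ 1 / 2 then (-Real.log t) ^ (-η) else (Real.log 2) ^ (-η)

/-- The lower (tail) Wolff potential
`L_{α,p}^s[μ](x) = ∫_s^∞ (μ(B_r(x))/r^{N-αp})^{1/(p-1)} dr/r`. -/
noncomputable def lowerWolff (N : ℕ) (α p s : ℝ)
    (μ : Measure (EuclideanSpace ℝ (Fin N))) (x : EuclideanSpace ℝ (Fin N)) : ℝ≥0∞ :=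
  ∫⁻ r in Set.Ioi s,
    (μ (Metric.ball x r) / ENNReal.ofReal (r ^ ((N : ℝ) - α * p))) ^ (1 / (p - 1)) *
      ENNReal.ofReal r⁻¹

private lemma aux_hasDerivAt (β : ℝ) (hβ : 0 < β) {r : ℝ} (hr0 : 0 < r) (hr1 : r < 1) :
    HasDerivAt (fun s : ℝ => -β * (-Real.log s) ^ (1 / β))
      ((-Real.log r) ^ (1 / β - 1) * r⁻¹) r := by
  have hL : 0 < -Real.log r := by
    have := Real.log_neg hr0 hr1
    linarith
  have h1 : HasDerivAt (fun s : ℝ => -Real.log s) (-r⁻¹) r :=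
    (Real.hasDerivAt_log hr0.ne').neg
  have h2 : HasDerivAt (fun y : ℝ => y ^ (1 / β))
      ((1 / β) * (-Real.log r) ^ (1 / β - 1)) (-Real.log r) :=
    Real.hasDerivAt_rpow_const (Or.inl hL.ne')
  have h3 := (h2.comp r h1).const_mul (-β)
  refine h3.congr_deriv ?_
  have hβ1 : β * (1 / β) = 1 := mul_one_div_cancel hβ.ne'
  linear_combination hβ1 * ((-Real.log r) ^ (1 / β - 1) * r⁻¹)

set_option maxHeartbeats 1000000 in
theorem lowerWolff_log_bound (N : ℕ) (α p β R C₀ : ℝ) (hα : 0 < α) (hp : 1 < p)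
    (hαp : α * p < N) (hβ : 1 ≤ β) (hR : 0 < R) (hC₀ : 0 < C₀)
    (μ : Measure (EuclideanSpace ℝ (Fin N)))
    (hM : ∀ (x : EuclideanSpace ℝ (Fin N)) (t : ℝ), 0 < t → t ≤ R →
      μ (Metric.ball x t) ≤
        ENNReal.ofReal (2 * t ^ ((N : ℝ) - α * p) * hfun ((p - 1) * (β - 1) / β) t))
    (hsupp : μ (Metric.ball (0 : EuclideanSpace ℝ (Fin N)) R)ᶜ = 0)
    (hfin : μ (Metric.ball (0 : EuclideanSpace ℝ (Fin N)) R) ≤ ENNReal.ofReal C₀) :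
    ∃ c : ℝ, 0 < c ∧ ∀ t : ℝ, 0 < t → t < 1 → ∀ x : EuclideanSpace ℝ (Fin N),
      lowerWolff N α p (2 * t) μ x ≤
        ENNReal.ofReal (c * (-Real.log (t / 2)) ^ (1 / β)) := by
  have hp1 : 0 < p - 1 := by linarith
  have hβ0 : 0 < β := by linarith
  have hNαp : 0 < (N : ℝ) - α * p := by linarith
  set e := 1 / (p - 1) with he
  have he0 : 0 < e := by positivity
  set q := ((N : ℝ) - α * p) / (p - 1) with hq
  have hq0 : 0 < q := by positivity
  set a := min R (1 / 2 : ℝ) with ha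
  have ha0 : 0 < a := lt_min hR (by norm_num)
  have haR : a ≤ R := min_le_left _ _
  have ha2 : a ≤ 1 / 2 := min_le_right _ _
  have ha1 : a < 1 := lt_of_le_of_lt ha2 (by norm_num)
  set cT := ∫ r in Set.Ioi a, C₀ ^ e * r ^ (-q - 1) with hcT
  have hcT0 : 0 ≤ cT := by
    apply setIntegral_nonneg measurableSet_Ioi
    intro r hr
    have hr0 : 0 < r := lt_trans ha0 hr
    positivity
  set cB := (2 : ℝ) ^ e * β with hcB
  have hcB0 : 0 < cB := by positivity
  have hlog2 : (0 : ℝ) < Real.log 2 := Real.log_pos (by norm_num)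
  set c := cB + cT / (Real.log 2) ^ (1 / β) with hc
  refine ⟨c, by positivity, ?_⟩
  intro t ht0 ht1 x
  -- basic facts about -log(t/2)
  have ht2 : (0 : ℝ) < t / 2 := by linarith
  have hX2 : Real.log 2 ≤ -Real.log (t / 2) := by
    have h1 : Real.log (t / 2) ≤ Real.log (1 / 2) := Real.log_le_log ht2 (by linarith)
    have h2 : Real.log (1 / 2) = -Real.log 2 := by
      rw [one_div, Real.log_inv]
    linarith
  have hX0 : 0 < -Real.log (t / 2) := lt_of_lt_of_le hlog2 hX2
  set X := (-Real.log (t / 2)) ^ (1 / β) with hXdef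
  have hXpos : 0 < X := Real.rpow_pos_of_pos hX0 _
  have hXge : (Real.log 2) ^ (1 / β) ≤ X :=
    Real.rpow_le_rpow hlog2.le hX2 (by positivity)
  -- total mass bound
  have hμu : μ Set.univ ≤ ENNReal.ofReal C₀ := by
    have := measure_union_le (μ := μ) (Metric.ball (0 : EuclideanSpace ℝ (Fin N)) R)
      (Metric.ball (0 : EuclideanSpace ℝ (Fin N)) R)ᶜ
    rw [Set.union_compl_self, hsupp, add_zero] at this
    exact this.trans hfin
  set F : ℝ → ℝ≥0∞ := fun r =>
    (μ (Metric.ball x r) / ENNReal.ofReal (r ^ ((N : ℝ) - α * p))) ^ (1 / (p - 1)) *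
      ENNReal.ofReal r⁻¹ with hF
  -- split
  have hsplit : lowerWolff N α p (2 * t) μ x ≤
      (∫⁻ r in Set.Ioc (2 * t) a, F r) + ∫⁻ r in Set.Ioi a, F r := by
    rw [lowerWolff]
    refine le_trans (lintegral_mono_set ?_) (lintegral_union_le _ _ _)
    intro r hr
    rcases le_or_gt r a with h | h
    · exact Or.inl ⟨hr, h⟩
    · exact Or.inr h
  -- tail bound
  have htail : (∫⁻ r in Set.Ioi a, F r) ≤ ENNReal.ofReal cT := by
    have hpt : ∀ r ∈ Set.Ioi a, F r ≤ ENNReal.ofReal (C₀ ^ e * r ^ (-q - 1)) := by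
      intro r hr
      have hr0 : 0 < r := lt_trans ha0 hr
      have hrc : 0 < r ^ ((N : ℝ) - α * p) := Real.rpow_pos_of_pos hr0 _
      have h1 : μ (Metric.ball x r) / ENNReal.ofReal (r ^ ((N : ℝ) - α * p)) ≤
          ENNReal.ofReal (C₀ / r ^ ((N : ℝ) - α * p)) := by
        rw [ENNReal.ofReal_div_of_pos hrc]
        exact ENNReal.div_le_div_right ((measure_mono (Set.subset_univ _)).trans hμu) _
      have h2 : F r ≤ ENNReal.ofReal ((C₀ / r ^ ((N : ℝ) - α * p)) ^ e) *
          ENNReal.ofReal r⁻¹ := by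
        refine mul_le_mul_left ?_ _
        rw [← he, ← ENNReal.ofReal_rpow_of_pos (x := C₀ / r ^ ((N : ℝ) - α * p)) (by positivity)]
        exact ENNReal.rpow_le_rpow h1 he0.le
      refine h2.trans ?_
      rw [← ENNReal.ofReal_mul (by positivity)]
      apply ENNReal.ofReal_le_ofReal
      have heq : (C₀ / r ^ ((N : ℝ) - α * p)) ^ e * r⁻¹ = C₀ ^ e * r ^ (-q - 1) := by
        rw [Real.div_rpow hC₀.le (by positivity), ← Real.rpow_mul hr0.le]
        have hqe : ((N : ℝ) - α * p) * e = q := by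
          rw [hq, he]; field_simp
        rw [hqe]
        rw [show -q - 1 = -q + -1 by ring, Real.rpow_add hr0,
          Real.rpow_neg hr0.le, Real.rpow_neg_one]
        field_simp
      rw [heq]
    have hint : IntegrableOn (fun r : ℝ => C₀ ^ e * r ^ (-q - 1)) (Set.Ioi a) := by
      exact (integrableOn_Ioi_rpow_of_lt (by linarith) ha0).const_mul _
    calc (∫⁻ r in Set.Ioi a, F r)
        ≤ ∫⁻ r in Set.Ioi a, ENNReal.ofReal (C₀ ^ e * r ^ (-q - 1)) := by
          refine lintegral_mono_ae ?_
          exact (ae_restrict_iff' measurableSet_Ioi).2 (ae_of_all _ hpt)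
      _ = ENNReal.ofReal cT := by
          rw [hcT, ofReal_integral_eq_lintegral_ofReal hint]
          exact (ae_restrict_iff' measurableSet_Ioi).2 (ae_of_all _ fun r hr => by
            have hr0 : 0 < r := lt_trans ha0 hr
            positivity)
  -- middle bound
  have hmid : (∫⁻ r in Set.Ioc (2 * t) a, F r) ≤ ENNReal.ofReal (cB * X) := by
    rcases le_or_gt a (2 * t) with hta | hta
    · rw [Set.Ioc_eq_empty (by exact fun h => absurd hta (not_le.2 h)), Measure.restrict_empty,
        lintegral_zero_measure]
      exact zero_le
    · -- pointwise bound
      set g : ℝ → ℝ := fun r => (2 : ℝ) ^ e * ((-Real.log r) ^ (1 / β - 1) * r⁻¹) with hg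
      have hpt : ∀ r ∈ Set.Ioc (2 * t) a, F r ≤ ENNReal.ofReal (g r) := by
        intro r hr
        have hr0 : 0 < r := lt_trans (by linarith) hr.1
        have hra : r ≤ a := hr.2
        have hrh : r ≤ 1 / 2 := hra.trans ha2
        have hr1 : r < 1 := lt_of_le_of_lt hrh (by norm_num)
        have hL : 0 < -Real.log r := by have := Real.log_neg hr0 hr1; linarith
        have hrc : 0 < r ^ ((N : ℝ) - α * p) := Real.rpow_pos_of_pos hr0 _
        have hu : 0 < (-Real.log r) ^ (-((p - 1) * (β - 1) / β)) :=
          Real.rpow_pos_of_pos hL _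
        have h1 : μ (Metric.ball x r) / ENNReal.ofReal (r ^ ((N : ℝ) - α * p)) ≤
            ENNReal.ofReal (2 * (-Real.log r) ^ (-((p - 1) * (β - 1) / β))) := by
          have hball := hM x r hr0 (hra.trans haR)
          rw [hfun, if_pos hrh] at hball
          calc μ (Metric.ball x r) / ENNReal.ofReal (r ^ ((N : ℝ) - α * p))
              ≤ ENNReal.ofReal
                  (2 * r ^ ((N : ℝ) - α * p) * (-Real.log r) ^ (-((p - 1) * (β - 1) / β))) /
                ENNReal.ofReal (r ^ ((N : ℝ) - α * p)) := ENNReal.div_le_div_right hball _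
            _ = ENNReal.ofReal (2 * (-Real.log r) ^ (-((p - 1) * (β - 1) / β))) := by
                rw [← ENNReal.ofReal_div_of_pos hrc]
                congr 1
                field_simp
        have h2 : F r ≤
            ENNReal.ofReal ((2 * (-Real.log r) ^ (-((p - 1) * (β - 1) / β))) ^ e) *
            ENNReal.ofReal r⁻¹ := by
          refine mul_le_mul_left ?_ _
          rw [← he, ← ENNReal.ofReal_rpow_of_pos
            (x := 2 * (-Real.log r) ^ (-((p - 1) * (β - 1) / β))) (by positivity)]
          exact ENNReal.rpow_le_rpow h1 he0.le
        refine h2.trans ?_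
        rw [← ENNReal.ofReal_mul (by positivity)]
        apply ENNReal.ofReal_le_ofReal
        have heq : (2 * (-Real.log r) ^ (-((p - 1) * (β - 1) / β))) ^ e * r⁻¹ = g r := by
          rw [Real.mul_rpow (by norm_num) hu.le, ← Real.rpow_mul hL.le]
          have hexp : -((p - 1) * (β - 1) / β) * e = 1 / β - 1 := by
            rw [he]; field_simp; ring
          rw [hexp, hg]
          ring
        rw [heq]
      -- integrability / continuity
      have h2t1 : 2 * t < 1 := lt_trans hta ha1
      have hcont : ContinuousOn g (Set.Icc (2 * t) a) := by
        have hsub : Set.Icc (2 * t) a ⊆ {(0 : ℝ)}ᶜ := by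
          intro r hr
          simp only [Set.mem_compl_iff, Set.mem_singleton_iff]
          have : 0 < r := lt_of_lt_of_le (by linarith) hr.1
          exact this.ne'
        have hlog : ContinuousOn (fun r : ℝ => -Real.log r) (Set.Icc (2 * t) a) :=
          (Real.continuousOn_log.mono hsub).neg
        have hrpow : ContinuousOn (fun r : ℝ => (-Real.log r) ^ (1 / β - 1))
            (Set.Icc (2 * t) a) := by
          apply hlog.rpow_const
          intro r hr
          have hr0 : 0 < r := lt_of_lt_of_le (by linarith) hr.1
          have hr1 : r < 1 := lt_of_le_of_lt hr.2 ha1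
          have hL : 0 < -Real.log r := by have := Real.log_neg hr0 hr1; linarith
          exact Or.inl hL.ne'
        have hinv : ContinuousOn (fun r : ℝ => r⁻¹) (Set.Icc (2 * t) a) :=
          continuousOn_inv₀.mono hsub
        exact ((continuousOn_const : ContinuousOn (fun _ : ℝ => (2 : ℝ) ^ e) _).mul (hrpow.mul hinv)).congr (fun r _ => by rw [hg]; rfl)
      have hint : IntegrableOn g (Set.Ioc (2 * t) a) :=
        (hcont.integrableOn_Icc).mono_set Set.Ioc_subset_Icc_self
      -- FTC
      have hderiv : ∀ r ∈ Set.uIcc (2 * t) a,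
          HasDerivAt (fun s : ℝ => -β * (-Real.log s) ^ (1 / β))
            ((-Real.log r) ^ (1 / β - 1) * r⁻¹) r := by
        intro r hr
        rw [Set.uIcc_of_le hta.le] at hr
        have hr0 : 0 < r := lt_of_lt_of_le (by linarith) hr.1
        have hr1 : r < 1 := lt_of_le_of_lt hr.2 ha1
        exact aux_hasDerivAt β hβ0 hr0 hr1
      have hii : IntervalIntegrable (fun r : ℝ => (-Real.log r) ^ (1 / β - 1) * r⁻¹)
          volume (2 * t) a := by
        have hsub : Set.Icc (2 * t) a ⊆ {(0 : ℝ)}ᶜ := by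
          intro r hr
          simp only [Set.mem_compl_iff, Set.mem_singleton_iff]
          exact (lt_of_lt_of_le (by linarith : (0:ℝ) < 2 * t) hr.1).ne'
        have hlog : ContinuousOn (fun r : ℝ => -Real.log r) (Set.Icc (2 * t) a) :=
          (Real.continuousOn_log.mono hsub).neg
        have hrpow : ContinuousOn (fun r : ℝ => (-Real.log r) ^ (1 / β - 1))
            (Set.Icc (2 * t) a) := by
          apply hlog.rpow_const
          intro r hr
          have hr0 : 0 < r := lt_of_lt_of_le (by linarith) hr.1
          have hr1 : r < 1 := lt_of_le_of_lt hr.2 ha1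
          have hL : 0 < -Real.log r := by have := Real.log_neg hr0 hr1; linarith
          exact Or.inl hL.ne'
        have hinv : ContinuousOn (fun r : ℝ => r⁻¹) (Set.Icc (2 * t) a) :=
          continuousOn_inv₀.mono hsub
        exact ((hrpow.mul hinv).mono (by rw [Set.uIcc_of_le hta.le])).intervalIntegrable
      have hFTC : ∫ r in (2 * t)..a, (-Real.log r) ^ (1 / β - 1) * r⁻¹ =
          (-β * (-Real.log a) ^ (1 / β)) - (-β * (-Real.log (2 * t)) ^ (1 / β)) :=
        intervalIntegral.integral_eq_sub_of_hasDerivAt hderiv hii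
      -- value bound
      have hL2t : 0 < -Real.log (2 * t) := by
        have := Real.log_neg (by linarith) h2t1
        linarith
      have hLa : 0 ≤ -Real.log a := by
        have := Real.log_neg ha0 ha1
        linarith
      have hmono : (-Real.log (2 * t)) ^ (1 / β) ≤ X := by
        apply Real.rpow_le_rpow hL2t.le _ (by positivity)
        have : Real.log (t / 2) ≤ Real.log (2 * t) := Real.log_le_log ht2 (by linarith)
        linarith
      have hval : ∫ r in Set.Ioc (2 * t) a, g r ≤ cB * X := by
        rw [← intervalIntegral.integral_of_le hta.le]
        have : ∫ r in (2 * t)..a, g r =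
            (2 : ℝ) ^ e * ∫ r in (2 * t)..a, (-Real.log r) ^ (1 / β - 1) * r⁻¹ := by
          rw [hg, intervalIntegral.integral_const_mul]
        rw [this, hFTC, hcB]
        have h2 : β * (-Real.log (2 * t)) ^ (1 / β) ≤ β * X :=
          mul_le_mul_of_nonneg_left hmono hβ0.le
        have h3 : (0:ℝ) ≤ (2:ℝ) ^ e := by positivity
        have h5 : 0 ≤ β * (-Real.log a) ^ (1 / β) :=
          mul_nonneg hβ0.le (Real.rpow_nonneg hLa _)
        have h4 : -β * (-Real.log a) ^ (1 / β) - -β * (-Real.log (2 * t)) ^ (1 / β) ≤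
            β * X := by linarith
        calc (2:ℝ) ^ e * (-β * (-Real.log a) ^ (1 / β) - -β * (-Real.log (2 * t)) ^ (1 / β))
            ≤ (2:ℝ) ^ e * (β * X) := mul_le_mul_of_nonneg_left h4 h3
          _ = (2:ℝ) ^ e * β * X := by ring
      calc (∫⁻ r in Set.Ioc (2 * t) a, F r)
          ≤ ∫⁻ r in Set.Ioc (2 * t) a, ENNReal.ofReal (g r) :=
            lintegral_mono_ae ((ae_restrict_iff' measurableSet_Ioc).2 (ae_of_all _ hpt))
        _ = ENNReal.ofReal (∫ r in Set.Ioc (2 * t) a, g r) := by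
            rw [ofReal_integral_eq_lintegral_ofReal hint]
            refine (ae_restrict_iff' measurableSet_Ioc).2 (ae_of_all _ fun r hr => ?_)
            have hr0 : 0 < r := lt_trans (by linarith) hr.1
            have hr1 : r < 1 := lt_of_le_of_lt hr.2 ha1
            have hL : 0 < -Real.log r := by have := Real.log_neg hr0 hr1; linarith
            rw [hg]
            positivity
        _ ≤ ENNReal.ofReal (cB * X) := ENNReal.ofReal_le_ofReal hval
  -- combine
  refine hsplit.trans ?_
  have htail' : ENNReal.ofReal cT ≤ ENNReal.ofReal (cT / (Real.log 2) ^ (1 / β) * X) := by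
    apply ENNReal.ofReal_le_ofReal
    have hL0 : (0:ℝ) < (Real.log 2) ^ (1 / β) := Real.rpow_pos_of_pos hlog2 _
    rw [div_mul_eq_mul_div, le_div_iff₀ hL0]
    nlinarith
  calc (∫⁻ r in Set.Ioc (2 * t) a, F r) + ∫⁻ r in Set.Ioi a, F r
      ≤ ENNReal.ofReal (cB * X) + ENNReal.ofReal (cT / (Real.log 2) ^ (1 / β) * X) :=
        add_le_add hmid (htail.trans htail')
    _ = ENNReal.ofReal (c * X) := by
        rw [← ENNReal.ofReal_add (by positivity) ?h2]
        · congr 1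
          rw [hc]; ring
        · positivity
end

section
/- Let q > p - 1 > 0, 1 < p < N, and suppose u is a nonnegative Borel function on ℝ^N, locally integrable to the power q, and μ a nonnegative Radon measure, such that u(x) ≥ c (∫_0^∞ ((∫_{B_t(x)} u^q dy + μ(B_t(x)))/t^{N-p})^{1/(p-1)} dt/t) for all x and some c > 0. If moreover N ≤ pq/(q-p+1), then u ≡ 0 and μ ≡ 0. -/
open MeasureTheory ENNReal
open Metric Set

theorem LWS_key_lower {N : ℕ} {p q c : ℝ} (hp : 1 < p) (hpN : p < N) (hc : 0 < c)
    {u : EuclideanSpace ℝ (Fin N) → ℝ} {μ : Measure (EuclideanSpace ℝ (Fin N))}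
    (hsup : ∀ x : EuclideanSpace ℝ (Fin N),
      ENNReal.ofReal c *
        (∫⁻ t in Set.Ioi (0 : ℝ),
          (((∫⁻ y in Metric.ball x t, ENNReal.ofReal (u y ^ q)) + μ (Metric.ball x t)) /
              ENNReal.ofReal (t ^ ((N : ℝ) - p))) ^ (1 / (p - 1)) *
            ENNReal.ofReal t⁻¹) ≤ ENNReal.ofReal (u x))
    (x : EuclideanSpace ℝ (Fin N)) {T : ℝ} (hT : 0 < T) {m : ℝ≥0∞}
    (hm : m ≤ (∫⁻ y in Metric.ball x T, ENNReal.ofReal (u y ^ q)) + μ (Metric.ball x T)) :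
    ENNReal.ofReal (c / 2) * (m / ENNReal.ofReal ((2 * T) ^ ((N : ℝ) - p))) ^ (1 / (p - 1)) ≤
      ENNReal.ofReal (u x) := by
  have hNp : (0:ℝ) ≤ (N:ℝ) - p := by linarith
  set ω : ℝ → ℝ≥0∞ := fun t =>
    (∫⁻ y in Metric.ball x t, ENNReal.ofReal (u y ^ q)) + μ (Metric.ball x t) with hω
  set F : ℝ → ℝ≥0∞ := fun t =>
    (ω t / ENNReal.ofReal (t ^ ((N : ℝ) - p))) ^ (1 / (p - 1)) * ENNReal.ofReal t⁻¹ with hF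
  have hωmono : Monotone ω := fun s t hst => add_le_add
    (lintegral_mono_set (ball_subset_ball hst)) (measure_mono (ball_subset_ball hst))
  have hFmeas : Measurable F := by
    apply Measurable.mul
    · exact (hωmono.measurable.div
        ((measurable_id.pow measurable_const).ennreal_ofReal)).pow measurable_const
    · exact measurable_inv.ennreal_ofReal
  set K : ℝ≥0∞ :=
    (m / ENNReal.ofReal ((2 * T) ^ ((N : ℝ) - p))) ^ (1 / (p - 1)) *
      ENNReal.ofReal ((2 * T)⁻¹) with hK
  have h1 : ∀ t ∈ Set.Ioo T (2 * T), K ≤ F t := by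
    rintro t ⟨ht1, ht2⟩
    have ht0 : 0 < t := hT.trans ht1
    have ha : m ≤ ω t := hm.trans (hωmono ht1.le)
    have hb : ENNReal.ofReal (t ^ ((N : ℝ) - p)) ≤ ENNReal.ofReal ((2 * T) ^ ((N : ℝ) - p)) :=
      ENNReal.ofReal_le_ofReal (Real.rpow_le_rpow ht0.le ht2.le hNp)
    have hdivle := ENNReal.div_le_div ha hb
    refine mul_le_mul' (ENNReal.rpow_le_rpow hdivle (one_div_nonneg.mpr (by linarith))) ?_
    exact ENNReal.ofReal_le_ofReal (by
      apply inv_anti₀ ht0 ht2.le)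
  have h2 : K * ENNReal.ofReal T ≤ ∫⁻ t in Set.Ioi (0:ℝ), F t := by
    calc K * ENNReal.ofReal T = ∫⁻ _t in Set.Ioo T (2 * T), K := by
          rw [setLIntegral_const, Real.volume_Ioo]
          congr 1
          ring_nf
      _ ≤ ∫⁻ t in Set.Ioo T (2 * T), F t := setLIntegral_mono hFmeas h1
      _ ≤ ∫⁻ t in Set.Ioi (0:ℝ), F t := lintegral_mono_set (fun t ht => hT.trans ht.1)
  have h3 := (mul_le_mul_right h2 (ENNReal.ofReal c)).trans (hsup x)
  refine le_trans (le_of_eq ?_) h3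
  rw [hK]
  have : ENNReal.ofReal c * (ENNReal.ofReal ((2*T)⁻¹) * ENNReal.ofReal T) =
      ENNReal.ofReal (c / 2) := by
    rw [← ENNReal.ofReal_mul (by positivity), ← ENNReal.ofReal_mul hc.le]
    congr 1
    field_simp
  calc ENNReal.ofReal (c / 2) * (m / ENNReal.ofReal ((2 * T) ^ ((N : ℝ) - p))) ^ (1 / (p - 1))
      = (ENNReal.ofReal c * (ENNReal.ofReal ((2*T)⁻¹) * ENNReal.ofReal T)) *
        (m / ENNReal.ofReal ((2 * T) ^ ((N : ℝ) - p))) ^ (1 / (p - 1)) := by rw [this]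
    _ = ENNReal.ofReal c *
        ((m / ENNReal.ofReal ((2 * T) ^ ((N : ℝ) - p))) ^ (1 / (p - 1)) *
          ENNReal.ofReal ((2 * T)⁻¹) * ENNReal.ofReal T) := by ring

theorem LWS_toReal_bound {m : ℝ≥0∞} (hm : m ≠ ⊤) {K c' ux e : ℝ} (hK : 0 < K) (hc' : 0 ≤ c')
    (hux : 0 ≤ ux) (he : 0 ≤ e)
    (h : ENNReal.ofReal c' * (m / ENNReal.ofReal K) ^ e ≤ ENNReal.ofReal ux) :
    c' * (m.toReal / K) ^ e ≤ ux := by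
  rw [← ENNReal.ofReal_toReal hm, ← ENNReal.ofReal_div_of_pos hK,
    ENNReal.ofReal_rpow_of_nonneg (by positivity) he, ← ENNReal.ofReal_mul hc'] at h
  exact (ENNReal.ofReal_le_ofReal_iff hux).mp h

theorem LWS_bootstrap {p q c v : ℝ} {N : ℕ} (hp : 1 < p) (hpN : p < N) (hq : p - 1 < q)
    (hc : 0 < c) (hv : 0 < v) (hdim : (N : ℝ) ≤ p * q / (q - p + 1)) {r x₀ : ℝ}
    (hr : 1 ≤ r) (hx : 0 ≤ x₀)
    (h : (c / 2 * (x₀ / (4 * r) ^ ((N : ℝ) - p)) ^ (1 / (p - 1))) ^ q * ((r : ℝ) ^ N * v) ≤ x₀) :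
    x₀ ≤ ((c / 2) ^ q * (4 : ℝ) ^ (-(((N : ℝ) - p) * q / (p - 1))) * v) ^
      (-(p - 1) / (q - p + 1)) := by
  have hp1 : (0:ℝ) < p - 1 := by linarith
  have hqpos : (0:ℝ) < q := by linarith
  have hq1 : (0:ℝ) < q - p + 1 := by linarith
  have hNp : (0:ℝ) < (N:ℝ) - p := by linarith
  have hr0 : (0:ℝ) < r := by linarith
  have h4r : (0:ℝ) < 4 * r := by linarith
  set β : ℝ := q / (p - 1) with hβ
  have hβ1 : 1 < β := (one_lt_div hp1).mpr (by linarith)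
  set κ : ℝ := (c / 2) ^ q * (4 : ℝ) ^ (-(((N : ℝ) - p) * q / (p - 1))) * v with hκ
  have hκpos : 0 < κ := by positivity
  rcases hx.eq_or_lt with h0 | hx0
  · rw [← h0]; positivity
  have hσ : 0 ≤ (N : ℝ) - ((N:ℝ) - p) * β := by
    rw [le_div_iff₀ hq1] at hdim
    rw [sub_nonneg, hβ, ← mul_div_assoc, div_le_iff₀ hp1]
    nlinarith
  have hA : (0:ℝ) < (4*r) ^ ((N:ℝ)-p) := Real.rpow_pos_of_pos h4r _
  have hrw : (c / 2 * (x₀ / (4 * r) ^ ((N : ℝ) - p)) ^ (1 / (p - 1))) ^ q * ((r:ℝ) ^ N * v)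
      = (κ * x₀ ^ β) * r ^ ((N:ℝ) - ((N:ℝ)-p) * β) := by
    rw [Real.mul_rpow (by positivity) (Real.rpow_nonneg (by positivity) _),
      ← Real.rpow_mul (by positivity),
      show 1/(p-1)*q = β by rw [hβ]; ring,
      Real.div_rpow hx hA.le, ← Real.rpow_natCast r N, hκ,
      Real.rpow_neg (by norm_num : (0:ℝ) ≤ 4),
      show ((N:ℝ)-p)*q/(p-1) = ((N:ℝ)-p)*β by rw [hβ]; ring,
      Real.rpow_sub hr0, ← Real.rpow_mul h4r.le,
      Real.mul_rpow (by norm_num : (0:ℝ) ≤ 4) hr0.le]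
    have h1 : (0:ℝ) < (4:ℝ) ^ (((N:ℝ)-p)*β) := Real.rpow_pos_of_pos (by norm_num) _
    have h2 : (0:ℝ) < r ^ (((N:ℝ)-p)*β) := Real.rpow_pos_of_pos hr0 _
    field_simp
  rw [hrw] at h
  have h1le : (1:ℝ) ≤ r ^ ((N:ℝ) - ((N:ℝ)-p) * β) := Real.one_le_rpow hr hσ
  have key : κ * x₀ ^ β ≤ x₀ := le_trans (le_mul_of_one_le_right (by positivity) h1le) h
  have hsplit : x₀ ^ β = x₀ * x₀ ^ (β - 1) := by
    have h' := Real.rpow_add hx0 1 (β - 1)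
    rw [Real.rpow_one] at h'
    rw [← h']
    norm_num
  rw [hsplit] at key
  have key2 : κ * x₀ ^ (β - 1) ≤ 1 := by
    have h'' : (κ * x₀ ^ (β - 1)) * x₀ ≤ 1 * x₀ := by
      have e : (κ * x₀ ^ (β - 1)) * x₀ = κ * (x₀ * x₀ ^ (β - 1)) := by ring
      rw [e, one_mul]; exact key
    exact le_of_mul_le_mul_right h'' hx0
  have hβ1' : (0:ℝ) < β - 1 := by linarith
  have key3 : x₀ ^ (β - 1) ≤ κ⁻¹ := by
    rw [← one_div, le_div_iff₀ hκpos, mul_comm]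
    exact key2
  have final := Real.rpow_le_rpow (by positivity) key3
    (by positivity : (0:ℝ) ≤ 1/(β-1))
  rw [← Real.rpow_mul hx0.le, mul_one_div, div_self hβ1'.ne', Real.rpow_one] at final
  have hexp : -(p-1)/(q-p+1) = -(1/(β-1)) := by
    rw [hβ]
    rw [show q / (p-1) - 1 = (q-p+1)/(p-1) by field_simp; ring]
    rw [one_div_div]
    ring
  rw [hexp, Real.rpow_neg hκpos.le, ← Real.inv_rpow hκpos.le]
  exact final

theorem LWS_diverge {N : ℕ} (hN : 1 ≤ N) {b R s : ℝ} (hb : 0 < b) (hR : 1 ≤ R)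
    (hs : 0 < s) (hsN : s ≤ N) :
    ∫⁻ x : EuclideanSpace ℝ (Fin N), ENNReal.ofReal (b * (2 * (‖x‖ + R)) ^ (-s)) = ⊤ := by
  haveI : Nontrivial (EuclideanSpace ℝ (Fin N)) :=
    Module.nontrivial_of_finrank_pos (R := ℝ) (by rw [finrank_euclideanSpace_fin]; omega)
  have hR0 : (0:ℝ) < R := lt_of_lt_of_le one_pos hR
  have h2N : (1:ℝ) < 2 ^ N := _root_.one_lt_pow₀ (by norm_num : (1:ℝ) < 2) (Nat.one_le_iff_ne_zero.mp hN)
  set v := volume (ball (0 : EuclideanSpace ℝ (Fin N)) 1) with hv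
  have hv0 : v ≠ 0 := (measure_ball_pos _ _ one_pos).ne'
  have hvtop : v ≠ ⊤ := measure_ball_lt_top.ne
  set f : EuclideanSpace ℝ (Fin N) → ℝ≥0∞ :=
    fun x => ENNReal.ofReal (b * (2 * (‖x‖ + R)) ^ (-s)) with hf
  have hfm : Measurable f :=
    ((((measurable_norm.add_const R).const_mul 2).pow measurable_const).const_mul b).ennreal_ofReal
  set S : ℕ → Set (EuclideanSpace ℝ (Fin N)) :=
    fun k => ball 0 (2 ^ (k+1) * R) \ ball 0 (2 ^ k * R) with hS
  have hSm : ∀ k, MeasurableSet (S k) := fun k => measurableSet_ball.diff measurableSet_ball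
  have hmonoR : ∀ {i j : ℕ}, i ≤ j → (2:ℝ) ^ i * R ≤ (2:ℝ) ^ j * R := fun h =>
    mul_le_mul_of_nonneg_right (pow_le_pow_right₀ one_le_two h) hR0.le
  have hdisj : Pairwise (Function.onFun Disjoint S) := by
    have hlt : ∀ i j, i < j → Disjoint (S i) (S j) := by
      intro i j hij
      refine Set.disjoint_left.mpr ?_
      rintro x ⟨hx1, -⟩ ⟨-, hx2⟩
      exact hx2 (ball_subset_ball (hmonoR hij) hx1)
    intro i j hij
    rcases hij.lt_or_gt with h | h
    · exact hlt _ _ h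
    · exact (hlt _ _ h).symm
  set ε : ℝ≥0∞ := ENNReal.ofReal (b * (2 ^ N - 1) * 8 ^ (-s)) * v with hε
  have hεne : ε ≠ 0 := by
    refine mul_ne_zero ?_ hv0
    refine (ENNReal.ofReal_pos.mpr ?_).ne'
    have h8 : (0:ℝ) < (8:ℝ) ^ (-s) := Real.rpow_pos_of_pos (by norm_num) _
    have h2N' : (0:ℝ) < 2 ^ N - 1 := by linarith
    positivity
  have hann : ∀ k : ℕ, ε ≤ ∫⁻ x in S k, f x := by
    intro k
    have h2k1 : (1:ℝ) ≤ 2 ^ k := one_le_pow₀ one_le_two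
    have h2k : (1:ℝ) ≤ 2 ^ k * R := by nlinarith
    have hpt : ∀ x ∈ S k,
        ENNReal.ofReal (b * (2 ^ (k+3) * R) ^ (-s)) ≤ f x := by
      rintro x ⟨hx1, -⟩
      rw [mem_ball, dist_zero_right] at hx1
      apply ENNReal.ofReal_le_ofReal
      apply mul_le_mul_of_nonneg_left _ hb.le
      have hxR : 2 * (‖x‖ + R) ≤ 2 ^ (k+3) * R := by
        have e1 : (2:ℝ) ^ (k+1) = 2 * 2 ^ k := by ring
        have e2 : (2:ℝ) ^ (k+3) = 8 * 2 ^ k := by ring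
        nlinarith [norm_nonneg x]
      exact Real.rpow_le_rpow_of_nonpos (by positivity) hxR (neg_nonpos.mpr hs.le)
    have hvol : volume (S k) = ENNReal.ofReal ((2 ^ k * R) ^ N * (2 ^ N - 1)) * v := by
      rw [hS]
      simp only
      rw [measure_diff (ball_subset_ball (hmonoR (Nat.le_succ k)))
        measurableSet_ball.nullMeasurableSet measure_ball_lt_top.ne,
        Measure.addHaar_ball _ _ (by positivity : (0:ℝ) ≤ 2 ^ (k+1) * R),
        Measure.addHaar_ball _ _ (by positivity : (0:ℝ) ≤ 2 ^ k * R),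
        finrank_euclideanSpace_fin, ← ENNReal.sub_mul (fun _ _ => hvtop),
        ← ENNReal.ofReal_sub _ (by positivity)]
      congr 2
      ring
    calc ε ≤ ENNReal.ofReal (b * (2 ^ (k+3) * R) ^ (-s)) * volume (S k) := by
          rw [hvol, hε, ← mul_assoc, ← ENNReal.ofReal_mul (by positivity)]
          refine mul_le_mul_left (ENNReal.ofReal_le_ofReal ?_) v
          have e2 : ((2:ℝ) ^ (k+3) * R) ^ (-s) = 8 ^ (-s) * (2 ^ k * R) ^ (-s) := by
            rw [show ((2:ℝ) ^ (k+3) * R) = 8 * (2 ^ k * R) by ring,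
              Real.mul_rpow (by norm_num) (by positivity)]
          have e3 : ((2:ℝ) ^ k * R) ^ (-s) * ((2:ℝ) ^ k * R) ^ ((N:ℝ)) =
              (2 ^ k * R) ^ ((N:ℝ) - s) := by
            rw [← Real.rpow_add (by positivity)]
            ring_nf
          have e4 : (1:ℝ) ≤ ((2:ℝ) ^ k * R) ^ ((N:ℝ) - s) :=
            Real.one_le_rpow h2k (by linarith)
          calc b * (2 ^ N - 1) * 8 ^ (-s)
              = (b * (2 ^ N - 1) * 8 ^ (-s)) * 1 := by ring
            _ ≤ (b * (2 ^ N - 1) * 8 ^ (-s)) *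
                (((2:ℝ) ^ k * R) ^ (-s) * ((2:ℝ) ^ k * R) ^ ((N:ℝ))) := by
                rw [e3]
                refine mul_le_mul_of_nonneg_left e4 ?_
                have h8 : (0:ℝ) < (8:ℝ) ^ (-s) := Real.rpow_pos_of_pos (by norm_num) _
                have h2N' : (0:ℝ) < 2 ^ N - 1 := by linarith
                positivity
            _ = b * (8 ^ (-s) * ((2:ℝ) ^ k * R) ^ (-s)) *
                (((2:ℝ) ^ k * R) ^ ((N:ℝ)) * (2 ^ N - 1)) := by ring
            _ = b * ((2:ℝ) ^ (k+3) * R) ^ (-s) * ((2 ^ k * R) ^ N * (2 ^ N - 1)) := by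
                rw [← e2, Real.rpow_natCast]
      _ ≤ ∫⁻ x in S k, f x := by
          rw [← setLIntegral_const]
          exact setLIntegral_mono hfm hpt
  have htsum : (⊤:ℝ≥0∞) ≤ ∑' k, ∫⁻ x in S k, f x :=
    le_trans (le_of_eq (ENNReal.tsum_const_eq_top_of_ne_zero hεne).symm)
      (ENNReal.tsum_le_tsum hann)
  refine top_le_iff.mp ?_
  calc (⊤:ℝ≥0∞) ≤ ∑' k, ∫⁻ x in S k, f x := htsum
    _ = ∫⁻ x in ⋃ k, S k, f x := (lintegral_iUnion hSm hdisj f).symm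
    _ ≤ ∫⁻ x, f x :=
        (lintegral_mono_set (subset_univ _)).trans (le_of_eq (setLIntegral_univ f))
/-- Liouville-type result: a nonnegative supersolution bound by the Wolff potential of
`u^q dx + dμ` with `N ≤ pq/(q-p+1)` forces `u ≡ 0` and `μ ≡ 0`. -/
theorem liouville_wolff_supersolution (N : ℕ) (p q c : ℝ)
    (hp : 1 < p) (hpN : p < N) (hq : p - 1 < q) (hc : 0 < c)
    (hdim : (N : ℝ) ≤ p * q / (q - p + 1))
    (u : EuclideanSpace ℝ (Fin N) → ℝ) (hu : Measurable u) (hupos : ∀ x, 0 ≤ u x)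
    (huq : LocallyIntegrable (fun x => u x ^ q))
    (μ : Measure (EuclideanSpace ℝ (Fin N)))
    (hsup : ∀ x : EuclideanSpace ℝ (Fin N),
      ENNReal.ofReal c *
        (∫⁻ t in Set.Ioi (0 : ℝ),
          (((∫⁻ y in Metric.ball x t, ENNReal.ofReal (u y ^ q)) + μ (Metric.ball x t)) /
              ENNReal.ofReal (t ^ ((N : ℝ) - p))) ^ (1 / (p - 1)) *
            ENNReal.ofReal t⁻¹) ≤ ENNReal.ofReal (u x)) :
    (∀ᵐ x : EuclideanSpace ℝ (Fin N), u x = 0) ∧ μ = 0 := by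
  have hp1 : (0:ℝ) < p - 1 := by linarith
  have hq0 : (0:ℝ) < q := by linarith
  have hq1 : (0:ℝ) < q - p + 1 := by linarith
  have hNp : (0:ℝ) < (N:ℝ) - p := by linarith
  have hN1R : (1:ℝ) < (N:ℝ) := hp.trans hpN
  have hN1 : 1 ≤ N := by exact_mod_cast hN1R.le
  haveI : Nontrivial (EuclideanSpace ℝ (Fin N)) :=
    Module.nontrivial_of_finrank_pos (R := ℝ) (by rw [finrank_euclideanSpace_fin]; omega)
  set g : EuclideanSpace ℝ (Fin N) → ℝ≥0∞ := fun y => ENNReal.ofReal (u y ^ q) with hg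
  have hgm : Measurable g := (hu.pow measurable_const).ennreal_ofReal
  set ν : Measure (EuclideanSpace ℝ (Fin N)) := volume.withDensity g + μ with hν
  have hνball : ∀ (x : EuclideanSpace ℝ (Fin N)) (t : ℝ),
      ν (Metric.ball x t) = (∫⁻ y in Metric.ball x t, g y) + μ (Metric.ball x t) := by
    intro x t
    rw [hν, Measure.add_apply, withDensity_apply g measurableSet_ball]
  set v := volume (Metric.ball (0 : EuclideanSpace ℝ (Fin N)) 1) with hv
  have hv0 : v ≠ 0 := (measure_ball_pos _ _ one_pos).ne'
  have hvtop : v ≠ ⊤ := measure_ball_lt_top.ne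
  have hvpos : 0 < v.toReal := ENNReal.toReal_pos hv0 hvtop
  set C₀ : ℝ := ((c / 2) ^ q * (4 : ℝ) ^ (-(((N : ℝ) - p) * q / (p - 1))) * v.toReal) ^
      (-(p - 1) / (q - p + 1)) with hC₀
  -- uniform bound on balls
  have hball : ∀ (z : EuclideanSpace ℝ (Fin N)) (r : ℝ), 1 ≤ r →
      ν (Metric.ball z r) ≤ ENNReal.ofReal C₀ := by
    intro z r hr
    have hr0 : (0:ℝ) < r := by linarith
    set X := ν (Metric.ball z r) with hX
    have hKL : ∀ x ∈ Metric.ball z r,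
        ENNReal.ofReal (c/2) *
          (X / ENNReal.ofReal ((4*r) ^ ((N:ℝ)-p))) ^ (1/(p-1)) ≤ ENNReal.ofReal (u x) := by
      intro x hx
      have hss : Metric.ball z r ⊆ Metric.ball x (2*r) := by
        intro y hy
        rw [Metric.mem_ball] at hy ⊢
        have h1 : dist y x ≤ dist y z + dist z x := dist_triangle y z x
        have h2 : dist z x < r := by rw [dist_comm]; exact hx
        linarith
      have hm : X ≤ (∫⁻ y in Metric.ball x (2*r), g y) + μ (Metric.ball x (2*r)) := by
        rw [hX, hνball]
        exact add_le_add (lintegral_mono_set hss) (measure_mono hss)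
      have hres := LWS_key_lower hp hpN hc hsup x (by linarith : (0:ℝ) < 2*r) hm
      rw [show (2:ℝ)*(2*r) = 4*r by ring] at hres
      exact hres
    have hXtop : X ≠ ⊤ := by
      intro htop
      have h1 := hKL z (Metric.mem_ball_self hr0)
      rw [htop, ENNReal.top_div_of_ne_top ENNReal.ofReal_ne_top,
        ENNReal.top_rpow_of_pos (by positivity : (0:ℝ) < 1/(p-1)),
        ENNReal.mul_top (by simp [ENNReal.ofReal_eq_zero]; linarith)] at h1
      exact ENNReal.ofReal_ne_top (top_le_iff.mp h1)
    have hreal : ∀ x ∈ Metric.ball z r,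
        c/2 * (X.toReal / (4*r) ^ ((N:ℝ)-p)) ^ (1/(p-1)) ≤ u x := fun x hx =>
      LWS_toReal_bound hXtop (by positivity) (by linarith) (hupos x)
        (one_div_nonneg.mpr hp1.le) (hKL x hx)
    set L : ℝ := c/2 * (X.toReal / (4*r) ^ ((N:ℝ)-p)) ^ (1/(p-1)) with hL
    have hL0 : 0 ≤ L := by positivity
    have hint : ENNReal.ofReal (L ^ q) * volume (Metric.ball z r) ≤ X := by
      calc ENNReal.ofReal (L^q) * volume (Metric.ball z r)
          = ∫⁻ _x in Metric.ball z r, ENNReal.ofReal (L^q) := (setLIntegral_const _ _).symm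
        _ ≤ ∫⁻ x in Metric.ball z r, g x := setLIntegral_mono hgm (fun x hx =>
            ENNReal.ofReal_le_ofReal (Real.rpow_le_rpow hL0 (hreal x hx) hq0.le))
        _ ≤ X := by rw [hX, hνball]; exact le_add_right le_rfl
    have hvol : volume (Metric.ball z r) = ENNReal.ofReal (r ^ N) * v := by
      rw [hv, Measure.addHaar_ball volume z hr0.le, finrank_euclideanSpace_fin]
    have harg : L ^ q * ((r:ℝ) ^ N * v.toReal) ≤ X.toReal := by
      have h2 := ENNReal.toReal_mono hXtop hint
      rw [ENNReal.toReal_mul, hvol, ENNReal.toReal_mul,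
        ENNReal.toReal_ofReal (by positivity), ENNReal.toReal_ofReal (by positivity)] at h2
      exact h2
    have hXle := LWS_bootstrap hp hpN hq hc hvpos hdim hr ENNReal.toReal_nonneg harg
    calc X = ENNReal.ofReal X.toReal := (ENNReal.ofReal_toReal hXtop).symm
      _ ≤ ENNReal.ofReal C₀ := ENNReal.ofReal_le_ofReal hXle
  -- total bound
  have hmono : Monotone (fun n : ℕ => Metric.ball (0 : EuclideanSpace ℝ (Fin N)) (n:ℝ)) :=
    fun a b hab => Metric.ball_subset_ball (by exact_mod_cast hab)
  have htotal : ν Set.univ ≤ ENNReal.ofReal C₀ := by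
    rw [← Metric.iUnion_ball_nat (0 : EuclideanSpace ℝ (Fin N)), hmono.measure_iUnion]
    refine iSup_le fun n => ?_
    rcases Nat.eq_zero_or_pos n with h0 | h0
    · subst h0; simp
    · exact hball 0 n (by exact_mod_cast h0)
  by_cases hν0 : ν Set.univ = 0
  · constructor
    · have hwd : ∫⁻ x, g x = 0 := by
        have h1 : volume.withDensity g Set.univ = 0 := by
          refine le_antisymm ?_ (zero_le)
          rw [← hν0, hν, Measure.add_apply]
          exact le_add_right le_rfl
        rwa [withDensity_apply g MeasurableSet.univ, setLIntegral_univ] at h1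
      have h2 := (lintegral_eq_zero_iff hgm).mp hwd
      filter_upwards [h2] with x hx
      rw [hg] at hx
      simp only [Pi.zero_apply, ENNReal.ofReal_eq_zero] at hx
      rcases (hupos x).eq_or_lt with h | h
      · exact h.symm
      · exact absurd (Real.rpow_pos_of_pos h q) (by linarith)
    · have h1 : μ Set.univ = 0 := by
        refine le_antisymm ?_ (zero_le)
        rw [← hν0, hν, Measure.add_apply]
        exact le_add_left le_rfl
      exact Measure.measure_univ_eq_zero.mp h1
  · exfalso
    obtain ⟨n, hn⟩ : ∃ n : ℕ, ν (Metric.ball (0 : EuclideanSpace ℝ (Fin N)) (n:ℝ)) ≠ 0 := by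
      by_contra hcon
      push_neg at hcon
      apply hν0
      rw [← Metric.iUnion_ball_nat (0 : EuclideanSpace ℝ (Fin N)), hmono.measure_iUnion]
      simp [hcon]
    set R : ℝ := (n:ℝ) + 1 with hR
    have hR1 : 1 ≤ R := by
      have hn0 : (0:ℝ) ≤ (n:ℝ) := Nat.cast_nonneg n
      rw [hR]; linarith
    have hR0 : 0 < R := by linarith
    set δ := ν (Metric.ball (0 : EuclideanSpace ℝ (Fin N)) R) with hδ
    have hδ0 : δ ≠ 0 := by
      intro h
      exact hn (le_antisymm (le_trans (measure_mono
        (Metric.ball_subset_ball (by linarith : (n:ℝ) ≤ R))) h.le) (zero_le))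
    have hδtop : δ ≠ ⊤ :=
      ((le_trans (measure_mono (Set.subset_univ _)) htotal).trans_lt
        ENNReal.ofReal_lt_top).ne
    set d := δ.toReal with hd
    have hd0 : 0 < d := ENNReal.toReal_pos hδ0 hδtop
    have hux : ∀ x : EuclideanSpace ℝ (Fin N),
        c/2 * (d / (2*(‖x‖+R)) ^ ((N:ℝ)-p)) ^ (1/(p-1)) ≤ u x := by
      intro x
      have hT : (0:ℝ) < ‖x‖ + R := by positivity
      have hsubset : Metric.ball (0 : EuclideanSpace ℝ (Fin N)) R ⊆
          Metric.ball x (‖x‖+R) := by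
        intro y hy
        rw [Metric.mem_ball] at hy ⊢
        have h1 : dist y x ≤ dist y 0 + dist 0 x := dist_triangle y 0 x
        rw [dist_zero_right] at hy
        rw [dist_zero_right] at h1
        have h2 : dist (0 : EuclideanSpace ℝ (Fin N)) x = ‖x‖ := by
          rw [dist_comm, dist_zero_right]
        rw [h2] at h1
        linarith
      have hm : δ ≤ (∫⁻ y in Metric.ball x (‖x‖+R), g y) + μ (Metric.ball x (‖x‖+R)) := by
        rw [← hνball]
        exact measure_mono hsubset
      have hres := LWS_key_lower hp hpN hc hsup x hT hm
      exact LWS_toReal_bound hδtop (by positivity) (by linarith) (hupos x)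
        (one_div_nonneg.mpr hp1.le) hres
    set s : ℝ := ((N:ℝ)-p) * q / (p-1) with hs
    have hs0 : 0 < s := by positivity
    have hsN : s ≤ (N:ℝ) := by
      rw [le_div_iff₀ hq1] at hdim
      rw [hs, div_le_iff₀ hp1]
      nlinarith
    set b : ℝ := (c/2)^q * d^(q/(p-1)) with hb
    have hb0 : 0 < b := by positivity
    have hpoint : ∀ x : EuclideanSpace ℝ (Fin N),
        ENNReal.ofReal (b * (2*(‖x‖+R))^(-s)) ≤ g x := by
      intro x
      apply ENNReal.ofReal_le_ofReal
      have hT : (0:ℝ) < ‖x‖ + R := by positivity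
      have hT2 : (0:ℝ) < 2*(‖x‖+R) := by linarith
      have h2 : (0:ℝ) ≤ c/2 * (d / (2*(‖x‖+R))^((N:ℝ)-p))^(1/(p-1)) := by positivity
      have hA : (0:ℝ) < (2*(‖x‖+R))^((N:ℝ)-p) := Real.rpow_pos_of_pos hT2 _
      calc b * (2*(‖x‖+R))^(-s)
          = (c/2 * (d / (2*(‖x‖+R))^((N:ℝ)-p))^(1/(p-1)))^q := by
            rw [Real.mul_rpow (by positivity) (Real.rpow_nonneg (by positivity) _),
              ← Real.rpow_mul (by positivity),
              show 1/(p-1)*q = q/(p-1) by ring,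
              Real.div_rpow hd0.le hA.le,
              ← Real.rpow_mul hT2.le,
              show ((N:ℝ)-p)*(q/(p-1)) = s by rw [hs]; ring,
              Real.rpow_neg hT2.le, hb]
            field_simp
        _ ≤ u x ^ q := Real.rpow_le_rpow h2 (hux x) hq0.le
    have hdiv := LWS_diverge hN1 hb0 hR1 hs0 hsN
    have hge : (⊤:ℝ≥0∞) ≤ ∫⁻ x, g x := hdiv ▸ lintegral_mono hpoint
    have hfin : ∫⁻ x, g x ≤ ENNReal.ofReal C₀ := by
      have he : ∫⁻ x, g x = volume.withDensity g Set.univ := by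
        rw [withDensity_apply g MeasurableSet.univ, setLIntegral_univ]
      rw [he]
      refine le_trans ?_ htotal
      rw [hν, Measure.add_apply]
      exact le_add_right le_rfl
    exact ENNReal.ofReal_ne_top (top_le_iff.mp (hge.trans hfin))
end

section
/- Let ω be a nonnegative locally finite measure on ℝ^N, P: [0,∞) → [0,∞) a nondecreasing function, q > 0, K a nonnegative function on ℝ^N, and suppose P(c K(x)) dx ≤ dω as measures. If M_ω denotes the centered Hardy–Littlewood maximal operator with respect to ω and P satisfies P(θ^{1/(p−1)} r) ≤ θ^{q} P(r) for 0 ≤ θ ≤ 1 (as holds for P = P_{l,a,β} with q = lβ/(p−1)), then for every Borel set E: ∫_{ℝ^N} P(c (M_ω χ_E)^{1/(p−1)} K) dx ≤ ∫_{ℝ^N} (M_ω χ_E)^q dω ≤ C ω(E), where C depends only on N and q (boundedness of M_ω on L^s(dω), s > 1, by Fefferman's theorem). -/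
open MeasureTheory ENNReal
open Metric Set

/-- Centered Hardy–Littlewood maximal function of `χ_E` with respect to `ω`. -/
noncomputable def maxOp (N : ℕ) (ω : Measure (EuclideanSpace ℝ (Fin N)))
    (E : Set (EuclideanSpace ℝ (Fin N))) (x : EuclideanSpace ℝ (Fin N)) : ℝ≥0∞ :=
  ⨆ (t : ℝ) (_ : 0 < t), ω (E ∩ Metric.ball x t) / ω (Metric.ball x t)

variable {N : ℕ} {ω : Measure (EuclideanSpace ℝ (Fin N))} {E : Set (EuclideanSpace ℝ (Fin N))}

lemma maxOp_le_one (x : EuclideanSpace ℝ (Fin N)) : maxOp N ω E x ≤ 1 := by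
  refine iSup₂_le fun t ht => ENNReal.div_le_of_le_mul ?_
  rw [one_mul]
  exact measure_mono inter_subset_right

lemma maxOp_eq_rat (x : EuclideanSpace ℝ (Fin N)) :
    maxOp N ω E x = ⨆ (s : ℚ) (_ : 0 < s), ω (E ∩ ball x s) / ω (ball x s) := by
  refine le_antisymm (iSup₂_le fun t ht => ?_) (iSup₂_le fun s hs => ?_)
  · have hU : E ∩ ball x t = ⋃ s : {s : ℚ // 0 < s ∧ (s : ℝ) < t}, E ∩ ball x s := by
      ext y
      simp only [mem_iUnion, mem_inter_iff, mem_ball]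
      constructor
      · rintro ⟨hyE, hyt⟩
        obtain ⟨s, hs1, hs2⟩ := exists_rat_btwn hyt
        have hs0 : 0 < s := by exact_mod_cast (dist_nonneg.trans_lt hs1).trans_le le_rfl
        exact ⟨⟨s, hs0, hs2⟩, hyE, hs1⟩
      · rintro ⟨s, hyE, hys⟩
        exact ⟨hyE, hys.trans s.2.2⟩
    have hdir : Directed (· ⊆ ·) fun s : {s : ℚ // 0 < s ∧ (s : ℝ) < t} => E ∩ ball x s := by
      intro a b
      rcases le_total (a : ℚ) b with h | h
      · exact ⟨b, inter_subset_inter_right _ (ball_subset_ball (by exact_mod_cast h)), subset_rfl⟩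
      · exact ⟨a, subset_rfl, inter_subset_inter_right _ (ball_subset_ball (by exact_mod_cast h))⟩
    rw [hU, hdir.measure_iUnion, ENNReal.iSup_div]
    refine iSup_le fun s => ?_
    calc ω (E ∩ ball x s) / ω (ball x t) ≤ ω (E ∩ ball x s) / ω (ball x s) :=
          ENNReal.div_le_div le_rfl (measure_mono (ball_subset_ball s.2.2.le))
      _ ≤ _ := le_iSup₂_of_le s.1 s.2.1 le_rfl
  · exact le_iSup₂_of_le (s : ℝ) (by exact_mod_cast hs) le_rfl

lemma measurable_maxOp [SFinite ω] (hE : MeasurableSet E) : Measurable (maxOp N ω E) := by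
  have key : ∀ t : ℝ, Measurable fun x : EuclideanSpace ℝ (Fin N) => ω (E ∩ ball x t) := by
    intro t
    have hs : MeasurableSet {p : (EuclideanSpace ℝ (Fin N)) × (EuclideanSpace ℝ (Fin N)) |
        p.2 ∈ E ∧ dist p.2 p.1 < t} := by
      refine (measurable_snd hE).inter ?_
      exact measurableSet_lt (continuous_snd.dist continuous_fst).measurable measurable_const
    have := measurable_measure_prodMk_left (ν := ω) hs
    convert this using 2 with x
    rfl
  have key2 : ∀ t : ℝ, Measurable fun x : EuclideanSpace ℝ (Fin N) => ω (ball x t) := by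
    intro t
    have hs : MeasurableSet {p : (EuclideanSpace ℝ (Fin N)) × (EuclideanSpace ℝ (Fin N)) |
        dist p.2 p.1 < t} :=
      measurableSet_lt (continuous_snd.dist continuous_fst).measurable measurable_const
    have := measurable_measure_prodMk_left (ν := ω) hs
    convert this using 2 with x
    rfl
  have : (maxOp N ω E) = fun x => ⨆ (s : ℚ) (_ : 0 < s), ω (E ∩ ball x s) / ω (ball x s) :=
    funext fun x => maxOp_eq_rat x
  rw [this]
  exact Measurable.iSup fun s => Measurable.iSup fun _ => (key s).div (key2 s)

variable {N : ℕ} {ω : Measure (EuclideanSpace ℝ (Fin N))} {E : Set (EuclideanSpace ℝ (Fin N))}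

lemma weak_type [IsLocallyFiniteMeasure ω] (hE : MeasurableSet E) {Nb : ℕ} {τ : ℝ} (hτ : 1 < τ)
    (hsat : IsEmpty (Besicovitch.SatelliteConfig (EuclideanSpace ℝ (Fin N)) Nb τ))
    {l : ℝ≥0∞} (hl : 0 < l) :
    l * ω {x | l < maxOp N ω E x} ≤ Nb * ω E := by
  set Sm : ℕ → Set (EuclideanSpace ℝ (Fin N)) := fun m =>
    {x | ∃ t : ℝ, 0 < t ∧ t ≤ m + 1 ∧ l < ω (E ∩ ball x t) / ω (ball x t)} with hSm
  have hS : {x | l < maxOp N ω E x} = ⋃ m, Sm m := by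
    ext x
    simp only [mem_setOf_eq, mem_iUnion, maxOp, lt_iSup_iff, hSm]
    constructor
    · rintro ⟨t, ht, hlt⟩
      obtain ⟨m, hm⟩ := exists_nat_ge t
      exact ⟨m, t, ht, hm.trans (by linarith), hlt⟩
    · rintro ⟨m, t, ht, _, hlt⟩
      exact ⟨t, ht, hlt⟩
  have hmono : Monotone Sm := by
    intro m m' hmm x hx
    obtain ⟨t, ht1, ht2, ht3⟩ := hx
    exact ⟨t, ht1, ht2.trans (by exact_mod_cast Nat.add_le_add_right hmm 1), ht3⟩
  rw [hS, hmono.measure_iUnion, ENNReal.mul_iSup]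
  refine iSup_le fun m => ?_
  -- Besicovitch covering of `Sm m`
  set pkg : Besicovitch.BallPackage (Sm m) (EuclideanSpace ℝ (Fin N)) :=
    { c := Subtype.val
      r := fun x => x.2.choose
      rpos := fun x => x.2.choose_spec.1
      r_bound := m + 1
      r_le := fun x => x.2.choose_spec.2.1 } with hpkg
  obtain ⟨s, hdisj, hcover⟩ := Besicovitch.exist_disjoint_covering_families hτ hsat pkg
  have hratio : ∀ j : Sm m, l < ω (E ∩ ball (j : EuclideanSpace ℝ (Fin N)) (pkg.r j)) / ω (ball (j : EuclideanSpace ℝ (Fin N)) (pkg.r j)) :=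
    fun j => j.2.choose_spec.2.2
  have hballpos : ∀ j : Sm m, 0 < ω (ball (j : EuclideanSpace ℝ (Fin N)) (pkg.r j)) := by
    intro j
    rcases eq_or_ne (ω (ball (j : EuclideanSpace ℝ (Fin N)) (pkg.r j))) 0 with h0 | h0
    · have hnum : ω (E ∩ ball (j : EuclideanSpace ℝ (Fin N)) (pkg.r j)) = 0 :=
        le_antisymm (h0 ▸ measure_mono inter_subset_right) (zero_le)
      have := hratio j
      rw [hnum, ENNReal.zero_div] at this
      exact absurd this (not_lt.mpr (zero_le)).elim
    · exact pos_iff_ne_zero.mpr h0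
  have hballfin : ∀ j : Sm m, ω (ball (j : EuclideanSpace ℝ (Fin N)) (pkg.r j)) ≠ ∞ := by
    intro j
    intro htop
    have := hratio j
    rw [htop, ENNReal.div_top] at this
    exact absurd this (not_lt.mpr (zero_le))
  have hmul : ∀ j : Sm m, l * ω (ball (j : EuclideanSpace ℝ (Fin N)) (pkg.r j)) ≤ ω (E ∩ ball (j : EuclideanSpace ℝ (Fin N)) (pkg.r j)) := by
    intro j
    calc l * ω (ball (j : EuclideanSpace ℝ (Fin N)) (pkg.r j))
        ≤ (ω (E ∩ ball (j : EuclideanSpace ℝ (Fin N)) (pkg.r j)) / ω (ball (j : EuclideanSpace ℝ (Fin N)) (pkg.r j))) *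
            ω (ball (j : EuclideanSpace ℝ (Fin N)) (pkg.r j)) := mul_le_mul_left (hratio j).le _
      _ = ω (E ∩ ball (j : EuclideanSpace ℝ (Fin N)) (pkg.r j)) :=
          ENNReal.div_mul_cancel (hballpos j).ne' (hballfin j)
  have hcover' : Sm m ⊆ ⋃ i, ⋃ j ∈ s i, ball (j : EuclideanSpace ℝ (Fin N)) (pkg.r j) := by
    intro x hx
    refine hcover ?_
    rw [show range pkg.c = Sm m from Subtype.range_val]
    exact hx
  have hcnt : ∀ i, (s i).Countable := by
    intro i
    have hd : Pairwise (Function.onFun Disjoint fun j : s i => closedBall ((j : Sm m) : EuclideanSpace ℝ (Fin N)) (pkg.r j)) := by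
      intro j k hjk
      exact hdisj i j.2 k.2 (fun h => hjk (Subtype.ext h))
    have := MeasureTheory.Measure.countable_meas_pos_of_disjoint_iUnion
      (μ := ω) (fun j : s i => measurableSet_closedBall) hd
    have huniv : {j : s i | 0 < ω (closedBall ((j : Sm m) : EuclideanSpace ℝ (Fin N)) (pkg.r j))} = univ := by
      ext j
      simp only [mem_setOf_eq, mem_univ, iff_true]
      exact (hballpos j).trans_le (measure_mono ball_subset_closedBall)
    rw [huniv] at this
    have : Countable (s i) := Set.countable_univ_iff.mp this
    exact Set.countable_coe_iff.mp this
  calc l * ω (Sm m)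
      ≤ l * ∑' i : Fin Nb, ω (⋃ j ∈ s i, ball (j : EuclideanSpace ℝ (Fin N)) (pkg.r j)) :=
        mul_le_mul_right ((measure_mono hcover').trans (measure_iUnion_le _)) _
    _ = ∑' i : Fin Nb, l * ω (⋃ j ∈ s i, ball (j : EuclideanSpace ℝ (Fin N)) (pkg.r j)) := ENNReal.tsum_mul_left.symm
    _ ≤ ∑' _i : Fin Nb, ω E := by
        refine ENNReal.tsum_le_tsum fun i => ?_
        calc l * ω (⋃ j ∈ s i, ball (j : EuclideanSpace ℝ (Fin N)) (pkg.r j))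
            ≤ l * ∑' j : s i, ω (ball ((j : Sm m) : EuclideanSpace ℝ (Fin N)) (pkg.r j)) :=
              mul_le_mul_right (measure_biUnion_le ω (hcnt i) _) _
          _ = ∑' j : s i, l * ω (ball ((j : Sm m) : EuclideanSpace ℝ (Fin N)) (pkg.r j)) := ENNReal.tsum_mul_left.symm
          _ ≤ ∑' j : s i, ω (E ∩ ball ((j : Sm m) : EuclideanSpace ℝ (Fin N)) (pkg.r j)) :=
              ENNReal.tsum_le_tsum fun j => hmul j
          _ = ω (⋃ j ∈ s i, (E ∩ ball ((j : Sm m) : EuclideanSpace ℝ (Fin N)) (pkg.r j))) := by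
              refine (measure_biUnion (hcnt i) ?_ fun j _ => hE.inter measurableSet_ball).symm
              intro j hj k hk hjk
              exact Disjoint.mono (inter_subset_right.trans ball_subset_closedBall)
                (inter_subset_right.trans ball_subset_closedBall) (hdisj i hj hk hjk)
          _ ≤ ω E := measure_mono (by simp only [iUnion_subset_iff]; exact fun j _ => inter_subset_left)
    _ = Nb * ω E := by
        rw [tsum_fintype]
        simp [Finset.sum_const, Finset.card_univ]



variable {α : Type*} [MeasurableSpace α]

/-- Dyadic-type bucket decomposition of `{0 < f}` for a function `f ≤ 1`. -/
lemma bucket_decomp (f : α → ℝ≥0∞) (hf : Measurable f) (hf1 : ∀ x, f x ≤ 1)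
    {ρ : ℝ≥0∞} (hρ1 : ρ < 1) :
    (∀ n : ℕ, MeasurableSet ({x | ρ ^ (n + 1) < f x} ∩ {x | f x ≤ ρ ^ n})) ∧
    Pairwise (Function.onFun Disjoint fun n : ℕ => {x | ρ ^ (n + 1) < f x} ∩ {x | f x ≤ ρ ^ n}) ∧
    (⋃ n : ℕ, {x | ρ ^ (n + 1) < f x} ∩ {x | f x ≤ ρ ^ n}) = {x | 0 < f x} := by
  set B : ℕ → Set α := fun n => {x | ρ ^ (n + 1) < f x} ∩ {x | f x ≤ ρ ^ n} with hB
  refine ⟨fun n => (measurableSet_lt measurable_const hf).inter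
    (measurableSet_le hf measurable_const), ?_, ?_⟩
  · intro n m hnm
    wlog hlt : n < m generalizing n m
    · exact (this hnm.symm (by omega)).symm
    refine Set.disjoint_left.mpr fun x hx hx' => ?_
    have : ρ ^ m ≤ ρ ^ (n + 1) := pow_le_pow_right_of_le_one' hρ1.le (by omega)
    exact absurd hx'.2 (not_le.mpr (this.trans_lt hx.1))
  · ext x
    simp only [mem_iUnion, mem_setOf_eq, hB, mem_inter_iff]
    constructor
    · rintro ⟨n, h1, _⟩
      exact (zero_le).trans_lt h1
    · intro hx
      have hex : ∃ m, ρ ^ m < f x := by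
        have := ENNReal.tendsto_pow_atTop_nhds_zero_of_lt_one hρ1
        rcases (this.eventually_lt_const hx).exists with ⟨m, hm⟩
        exact ⟨m, hm⟩
      have hm : ρ ^ (Nat.find hex) < f x := Nat.find_spec hex
      set m := Nat.find hex with hmdef
      have hm1 : 1 ≤ m := by
        by_contra hc
        push_neg at hc
        interval_cases m
        · exact absurd (hm.trans_le (hf1 x)) (by simp)
      refine ⟨m - 1, ?_, ?_⟩
      · have h : m - 1 + 1 = m := by omega
        rw [h]; exact hm
      · exact not_lt.mp (Nat.find_min hex (by omega))

/-- Layering comparison: if `g dμ ≤ dω` on measurable sets, then for measurable `f ≤ 1`,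
`∫ f^q g dμ ≤ ∫ f^q dω`. -/
lemma lintegral_rpow_mul_le (μ ω : Measure α)
    (g f : α → ℝ≥0∞) (hf : Measurable f) (hf1 : ∀ x, f x ≤ 1) {q : ℝ} (hq : 0 < q)
    (h : ∀ A : Set α, MeasurableSet A → ∫⁻ x in A, g x ∂μ ≤ ω A) :
    ∫⁻ x, f x ^ q * g x ∂μ ≤ ∫⁻ x, f x ^ q ∂ω := by
  refine ENNReal.le_of_forall_lt_one_mul_le fun a ha => ?_
  rcases eq_or_ne a 0 with rfl | ha0
  · simp
  set ρ : ℝ≥0∞ := a ^ (1 / q) with hρ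
  have hρ1 : ρ < 1 := ENNReal.rpow_lt_one ha (by positivity)
  have hρq : ρ ^ q = a := by
    rw [hρ, ← ENNReal.rpow_mul, one_div, inv_mul_cancel₀ hq.ne', ENNReal.rpow_one]
  obtain ⟨hBmeas, hBdisj, hBunion⟩ := bucket_decomp f hf hf1 hρ1
  set B : ℕ → Set α := fun n => {x | ρ ^ (n + 1) < f x} ∩ {x | f x ≤ ρ ^ n} with hB
  have hUmeas : MeasurableSet (⋃ n, B n) := MeasurableSet.iUnion hBmeas
  have hterm_ne_top : ∀ n : ℕ, (ρ ^ n : ℝ≥0∞) ^ q ≠ ∞ := by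
    intro n
    have : (ρ ^ n : ℝ≥0∞) ^ q ≤ 1 := by
      calc (ρ ^ n : ℝ≥0∞) ^ q ≤ (1 : ℝ≥0∞) ^ q :=
            ENNReal.rpow_le_rpow (pow_le_one' hρ1.le n) hq.le
        _ = 1 := ENNReal.one_rpow q
    exact ne_top_of_le_ne_top ENNReal.one_ne_top this
  have key : ∫⁻ x, f x ^ q * g x ∂μ ≤ ∑' n, (ρ ^ n : ℝ≥0∞) ^ q * ω (B n) := by
    rw [← lintegral_add_compl (fun x => f x ^ q * g x) hUmeas]
    have hcompl : ∫⁻ x in (⋃ n, B n)ᶜ, f x ^ q * g x ∂μ ≤ 0 := by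
      have step : ∫⁻ x in (⋃ n, B n)ᶜ, f x ^ q * g x ∂μ ≤
          ∫⁻ _ in (⋃ n, B n)ᶜ, (0 : ℝ≥0∞) ∂μ := by
        refine setLIntegral_mono' hUmeas.compl fun x hx => ?_
        have : ¬ (0 < f x) := fun hc => hx (by rw [hBunion]; exact hc)
        have hfx : f x = 0 := by simpa [not_lt, le_zero_iff] using this
        simp [hfx, ENNReal.zero_rpow_of_pos hq]
      simpa using step
    have hunion : ∫⁻ x in ⋃ n, B n, f x ^ q * g x ∂μ ≤
        ∑' n, (ρ ^ n : ℝ≥0∞) ^ q * ω (B n) := by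
      rw [lintegral_iUnion hBmeas hBdisj]
      refine ENNReal.tsum_le_tsum fun n => ?_
      calc ∫⁻ x in B n, f x ^ q * g x ∂μ ≤ ∫⁻ x in B n, (ρ ^ n : ℝ≥0∞) ^ q * g x ∂μ :=
            setLIntegral_mono' (hBmeas n) fun x hx =>
              mul_le_mul_left (ENNReal.rpow_le_rpow hx.2 hq.le) _
        _ = (ρ ^ n : ℝ≥0∞) ^ q * ∫⁻ x in B n, g x ∂μ :=
            lintegral_const_mul' _ _ (hterm_ne_top n)
        _ ≤ (ρ ^ n : ℝ≥0∞) ^ q * ω (B n) := mul_le_mul_right (h _ (hBmeas n)) _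
    calc _ ≤ ∑' n, (ρ ^ n : ℝ≥0∞) ^ q * ω (B n) + 0 := add_le_add hunion hcompl
      _ = _ := add_zero _
  have key2 : ∑' n, (ρ ^ (n + 1) : ℝ≥0∞) ^ q * ω (B n) ≤ ∫⁻ x, f x ^ q ∂ω := by
    calc ∑' n, (ρ ^ (n + 1) : ℝ≥0∞) ^ q * ω (B n)
        ≤ ∑' n, ∫⁻ x in B n, f x ^ q ∂ω := by
          refine ENNReal.tsum_le_tsum fun n => ?_
          calc (ρ ^ (n + 1) : ℝ≥0∞) ^ q * ω (B n)
              = ∫⁻ _ in B n, (ρ ^ (n + 1) : ℝ≥0∞) ^ q ∂ω := (setLIntegral_const _ _).symm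
            _ ≤ ∫⁻ x in B n, f x ^ q ∂ω :=
                setLIntegral_mono' (hBmeas n) fun x hx =>
                  ENNReal.rpow_le_rpow hx.1.le hq.le
      _ = ∫⁻ x in ⋃ n, B n, f x ^ q ∂ω := (lintegral_iUnion hBmeas hBdisj _).symm
      _ ≤ ∫⁻ x, f x ^ q ∂ω := setLIntegral_le_lintegral _ _
  calc a * ∫⁻ x, f x ^ q * g x ∂μ ≤ ρ ^ q * ∑' n, (ρ ^ n : ℝ≥0∞) ^ q * ω (B n) := by
        rw [hρq]; exact mul_le_mul_right key _
    _ = ∑' n, (ρ ^ (n + 1) : ℝ≥0∞) ^ q * ω (B n) := by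
        rw [← ENNReal.tsum_mul_left]
        congr 1
        ext n
        rw [← mul_assoc, ← ENNReal.mul_rpow_of_nonneg _ _ hq.le, ← pow_succ']
    _ ≤ ∫⁻ x, f x ^ q ∂ω := key2

/-- Upper bound of `∫ f^q dω` by the layered sum of superlevel measures. -/
lemma lintegral_rpow_le_tsum (ω : Measure α)
    (f : α → ℝ≥0∞) (hf : Measurable f) (hf1 : ∀ x, f x ≤ 1) {q : ℝ} (hq : 0 < q) :
    ∫⁻ x, f x ^ q ∂ω ≤
      ∑' n : ℕ, ((2 : ℝ≥0∞)⁻¹ ^ n) ^ q * ω {x | (2 : ℝ≥0∞)⁻¹ ^ (n + 1) < f x} := by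
  have hρ1 : (2 : ℝ≥0∞)⁻¹ < 1 := by
    rw [ENNReal.inv_lt_one]
    exact one_lt_two
  obtain ⟨hBmeas, hBdisj, hBunion⟩ := bucket_decomp f hf hf1 hρ1
  set B : ℕ → Set α := fun n =>
    {x | (2 : ℝ≥0∞)⁻¹ ^ (n + 1) < f x} ∩ {x | f x ≤ (2 : ℝ≥0∞)⁻¹ ^ n} with hB
  have hUmeas : MeasurableSet (⋃ n, B n) := MeasurableSet.iUnion hBmeas
  rw [← lintegral_add_compl (fun x => f x ^ q) hUmeas]
  have hcompl : ∫⁻ x in (⋃ n, B n)ᶜ, f x ^ q ∂ω ≤ 0 := by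
    have step : ∫⁻ x in (⋃ n, B n)ᶜ, f x ^ q ∂ω ≤
        ∫⁻ _ in (⋃ n, B n)ᶜ, (0 : ℝ≥0∞) ∂ω := by
      refine setLIntegral_mono' hUmeas.compl fun x hx => ?_
      have : ¬ (0 < f x) := fun hc => hx (by rw [hBunion]; exact hc)
      have hfx : f x = 0 := by simpa [not_lt, le_zero_iff] using this
      simp [hfx, ENNReal.zero_rpow_of_pos hq]
    simpa using step
  have hunion : ∫⁻ x in ⋃ n, B n, f x ^ q ∂ω ≤
      ∑' n : ℕ, ((2 : ℝ≥0∞)⁻¹ ^ n) ^ q * ω {x | (2 : ℝ≥0∞)⁻¹ ^ (n + 1) < f x} := by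
    rw [lintegral_iUnion hBmeas hBdisj]
    refine ENNReal.tsum_le_tsum fun n => ?_
    calc ∫⁻ x in B n, f x ^ q ∂ω
        ≤ ∫⁻ _ in B n, ((2 : ℝ≥0∞)⁻¹ ^ n) ^ q ∂ω :=
          setLIntegral_mono' (hBmeas n) fun x hx => ENNReal.rpow_le_rpow hx.2 hq.le
      _ = ((2 : ℝ≥0∞)⁻¹ ^ n) ^ q * ω (B n) := setLIntegral_const _ _
      _ ≤ ((2 : ℝ≥0∞)⁻¹ ^ n) ^ q * ω {x | (2 : ℝ≥0∞)⁻¹ ^ (n + 1) < f x} :=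
          mul_le_mul_right (measure_mono inter_subset_left) _
  calc _ ≤ (∑' n : ℕ, ((2 : ℝ≥0∞)⁻¹ ^ n) ^ q * ω {x | (2 : ℝ≥0∞)⁻¹ ^ (n + 1) < f x}) + 0 :=
        add_le_add hunion hcompl
    _ = _ := add_zero _

theorem maximal_function_capacity_estimate (N : ℕ) (p q : ℝ)
    (hp : 1 < p) (hq : 1 < q) :
    ∃ C : ℝ, 0 < C ∧
      ∀ (ω : Measure (EuclideanSpace ℝ (Fin N))), IsLocallyFiniteMeasure ω →
      ∀ (P : ℝ → ℝ), MonotoneOn P (Set.Ici (0 : ℝ)) → (∀ r : ℝ, 0 ≤ r → 0 ≤ P r) →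
        (∀ θ r : ℝ, 0 ≤ θ → θ ≤ 1 → 0 ≤ r →
          P (θ ^ (1 / (p - 1)) * r) ≤ θ ^ q * P r) →
      ∀ (K : EuclideanSpace ℝ (Fin N) → ℝ) (c : ℝ), 0 < c → (∀ x, 0 ≤ K x) →
        (∀ A : Set (EuclideanSpace ℝ (Fin N)), MeasurableSet A →
          ∫⁻ x in A, ENNReal.ofReal (P (c * K x)) ≤ ω A) →
      ∀ E : Set (EuclideanSpace ℝ (Fin N)), MeasurableSet E →
        (∫⁻ x, ENNReal.ofReal
            (P (c * ((maxOp N ω E x).toReal) ^ (1 / (p - 1)) * K x)) ≤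
          ∫⁻ x, (maxOp N ω E x) ^ q ∂ω) ∧
        (∫⁻ x, (maxOp N ω E x) ^ q ∂ω ≤ ENNReal.ofReal C * ω E) := by
  obtain ⟨Nb, τ, hτ, hsat⟩ :=
    HasBesicovitchCovering.no_satelliteConfig (α := EuclideanSpace ℝ (Fin N))
  have hq0 : (0 : ℝ) < q := lt_trans one_pos hq
  set sgeo : ℝ≥0∞ := (2 : ℝ≥0∞) ^ ((1 : ℝ) - q) with hsgeo
  have hsgeo1 : sgeo < 1 :=
    ENNReal.rpow_lt_one_of_one_lt_of_neg (by norm_num) (by linarith)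
  set Cb : ℝ≥0∞ := (Nb : ℝ≥0∞) * 2 * (1 - sgeo)⁻¹ with hCb
  have hCbne : Cb ≠ ∞ := by
    refine ENNReal.mul_ne_top (ENNReal.mul_ne_top (by simp) (by norm_num)) ?_
    rw [ENNReal.inv_ne_top]
    exact (tsub_pos_of_lt hsgeo1).ne'
  refine ⟨Cb.toReal + 1, by positivity, ?_⟩
  intro ω hω P hPmono hPnn hPθ K c hc hK hPK E hE
  haveI := hω
  have hf1 : ∀ x, maxOp N ω E x ≤ 1 := fun x => maxOp_le_one x
  have hfm : Measurable (maxOp N ω E) := measurable_maxOp hE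
  have hfq_ne_top : ∀ x, (maxOp N ω E x) ^ q ≠ ∞ := by
    intro x
    refine ne_top_of_le_ne_top ENNReal.one_ne_top ?_
    calc (maxOp N ω E x) ^ q ≤ (1 : ℝ≥0∞) ^ q := ENNReal.rpow_le_rpow (hf1 x) hq0.le
      _ = 1 := ENNReal.one_rpow q
  constructor
  · -- first inequality
    have hpt : ∀ x, ENNReal.ofReal (P (c * ((maxOp N ω E x).toReal) ^ (1 / (p - 1)) * K x)) ≤
        (maxOp N ω E x) ^ q * ENNReal.ofReal (P (c * K x)) := by
      intro x
      set θ : ℝ := (maxOp N ω E x).toReal with hθdef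
      have hθ0 : 0 ≤ θ := ENNReal.toReal_nonneg
      have hθ1 : θ ≤ 1 := by
        rw [hθdef]
        calc (maxOp N ω E x).toReal ≤ (1 : ℝ≥0∞).toReal :=
              ENNReal.toReal_mono ENNReal.one_ne_top (hf1 x)
          _ = 1 := ENNReal.toReal_one
      have h1 : P (c * θ ^ (1 / (p - 1)) * K x) ≤ θ ^ q * P (c * K x) := by
        rw [show c * θ ^ (1 / (p - 1)) * K x = θ ^ (1 / (p - 1)) * (c * K x) from by ring]
        exact hPθ θ (c * K x) hθ0 hθ1 (mul_nonneg hc.le (hK x))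
      calc ENNReal.ofReal (P (c * θ ^ (1 / (p - 1)) * K x))
          ≤ ENNReal.ofReal (θ ^ q * P (c * K x)) := ENNReal.ofReal_le_ofReal h1
        _ = ENNReal.ofReal (θ ^ q) * ENNReal.ofReal (P (c * K x)) :=
            ENNReal.ofReal_mul (by positivity)
        _ = (maxOp N ω E x) ^ q * ENNReal.ofReal (P (c * K x)) := by
            rw [hθdef, ENNReal.toReal_rpow, ENNReal.ofReal_toReal (hfq_ne_top x)]
    calc ∫⁻ x, ENNReal.ofReal (P (c * ((maxOp N ω E x).toReal) ^ (1 / (p - 1)) * K x))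
        ≤ ∫⁻ x, (maxOp N ω E x) ^ q * ENNReal.ofReal (P (c * K x)) := lintegral_mono hpt
      _ ≤ ∫⁻ x, (maxOp N ω E x) ^ q ∂ω :=
          lintegral_rpow_mul_le volume ω _ _ hfm hf1 hq0 hPK
  · -- second inequality
    have hweak : ∀ n : ℕ, ω {x | (2 : ℝ≥0∞)⁻¹ ^ (n + 1) < maxOp N ω E x} ≤
        (2 : ℝ≥0∞) ^ (n + 1) * ((Nb : ℝ≥0∞) * ω E) := by
      intro n
      set l : ℝ≥0∞ := (2 : ℝ≥0∞)⁻¹ ^ (n + 1) with hl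
      have hlpos : 0 < l := by
        rw [hl, pos_iff_ne_zero]
        exact pow_ne_zero _ (ENNReal.inv_ne_zero.mpr (by norm_num))
      have hw := weak_type (ω := ω) hE hτ hsat hlpos
      have hcanc : (2 : ℝ≥0∞) ^ (n + 1) * (2 : ℝ≥0∞)⁻¹ ^ (n + 1) = 1 := by
        rw [← mul_pow, ENNReal.mul_inv_cancel (by norm_num) (by norm_num), one_pow]
      calc ω {x | l < maxOp N ω E x}
          = ((2 : ℝ≥0∞) ^ (n + 1) * (2 : ℝ≥0∞)⁻¹ ^ (n + 1)) * ω {x | l < maxOp N ω E x} := by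
            rw [hcanc, one_mul]
        _ = (2 : ℝ≥0∞) ^ (n + 1) * (l * ω {x | l < maxOp N ω E x}) := by
            rw [mul_assoc]
        _ ≤ (2 : ℝ≥0∞) ^ (n + 1) * ((Nb : ℝ≥0∞) * ω E) := mul_le_mul_right hw _
    have hterm : ∀ n : ℕ, ((2 : ℝ≥0∞)⁻¹ ^ n) ^ q * (2 : ℝ≥0∞) ^ (n + 1) = 2 * sgeo ^ n := by
      intro n
      have h2 : ((2 : ℝ≥0∞)⁻¹ ^ n) ^ q = (2 : ℝ≥0∞) ^ (-(n : ℝ) * q) := by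
        rw [← ENNReal.rpow_natCast (2 : ℝ≥0∞)⁻¹ n, ← ENNReal.rpow_neg_one (2 : ℝ≥0∞),
          ← ENNReal.rpow_mul, ← ENNReal.rpow_mul]
        ring_nf
      have h3 : ((2 : ℝ≥0∞)) ^ (n + 1) = (2 : ℝ≥0∞) ^ (((n : ℝ)) + 1) := by
        rw [← ENNReal.rpow_natCast (2 : ℝ≥0∞) (n + 1)]
        norm_num
      rw [h2, h3, ← ENNReal.rpow_add _ _ (by norm_num) (by norm_num),
        show -(n : ℝ) * q + ((n : ℝ) + 1) = 1 + ((1 : ℝ) - q) * (n : ℝ) by ring,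
        ENNReal.rpow_add _ _ (by norm_num) (by norm_num), ENNReal.rpow_one,
        ENNReal.rpow_mul, ENNReal.rpow_natCast]
    calc ∫⁻ x, (maxOp N ω E x) ^ q ∂ω
        ≤ ∑' n : ℕ, ((2 : ℝ≥0∞)⁻¹ ^ n) ^ q *
            ω {x | (2 : ℝ≥0∞)⁻¹ ^ (n + 1) < maxOp N ω E x} :=
          lintegral_rpow_le_tsum ω _ hfm hf1 hq0
      _ ≤ ∑' n : ℕ, ((2 : ℝ≥0∞)⁻¹ ^ n) ^ q *
            ((2 : ℝ≥0∞) ^ (n + 1) * ((Nb : ℝ≥0∞) * ω E)) :=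
          ENNReal.tsum_le_tsum fun n => mul_le_mul_right (hweak n) _
      _ = ∑' n : ℕ, (2 * sgeo ^ n) * ((Nb : ℝ≥0∞) * ω E) := by
          refine tsum_congr fun n => ?_
          rw [← mul_assoc, hterm n]
      _ = (∑' n : ℕ, 2 * sgeo ^ n) * ((Nb : ℝ≥0∞) * ω E) := ENNReal.tsum_mul_right
      _ = (2 * (1 - sgeo)⁻¹) * ((Nb : ℝ≥0∞) * ω E) := by
          rw [ENNReal.tsum_mul_left, ENNReal.tsum_geometric]
      _ = Cb * ω E := by rw [hCb]; ring
      _ ≤ ENNReal.ofReal (Cb.toReal + 1) * ω E := by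
          refine mul_le_mul_left ?_ _
          conv_lhs => rw [← ENNReal.ofReal_toReal hCbne]
          exact ENNReal.ofReal_le_ofReal (by linarith [ENNReal.toReal_nonneg (a := Cb)])
end
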